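/- Hyperbolicity of the equilibrium of the reduced layer dynamics: let B be symmetric negative definite and γ, τ > 0. Then every complex eigenvalue of J is real and nonzero; the eigenvalues of J are exactly the numbers (−γ + √(γ² + 4τμ²))/(2τ) > 0 and (−γ − √(γ² + 4τμ²))/(2τ) < 0, where −μ² (with μ > 0) ranges over the eigenvalues of B; and, counted with multiplicity, the characteristic polynomial of J has exactly N positive real roots and N negative real roots. -/

import Mathlib

open Matrix Polynomial

namespace HypAux

lemma eval_charpoly' {m : Type*} [Fintype m] [DecidableEq m]
    (M : Matrix m m ℝ) (x : ℝ) :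
    M.charpoly.eval x = (x • (1 : Matrix m m ℝ) - M).det := by
  rw [Matrix.charpoly, ← Polynomial.coe_evalRingHom, RingHom.map_det]
  congr 1
  ext i j
  by_cases h : i = j
  · subst h
    simp [Matrix.charmatrix_apply_eq, Matrix.one_apply]
  · simp [Matrix.charmatrix_apply_ne _ _ _ h, Matrix.one_apply, h]

lemma hasEigenvalue_iff_isRoot_charpoly {m : Type*} [Fintype m] [DecidableEq m]
    (M : Matrix m m ℝ) (μ : ℝ) :
    Module.End.HasEigenvalue (Matrix.toLin' M) μ ↔ M.charpoly.IsRoot μ := by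
  have h1 : M.charpoly.IsRoot μ ↔ ((μ • (1 : Matrix m m ℝ) - M)).det = 0 := by
    rw [Polynomial.IsRoot, eval_charpoly']
  rw [h1, ← Matrix.exists_mulVec_eq_zero_iff,
    Module.End.hasEigenvalue_iff, Submodule.ne_bot_iff]
  constructor
  · rintro ⟨v, hv, hv0⟩
    refine ⟨v, hv0, ?_⟩
    rw [Module.End.mem_eigenspace_iff, Matrix.toLin'_apply] at hv
    rw [Matrix.sub_mulVec, Matrix.smul_mulVec, Matrix.one_mulVec, hv, sub_self]
  · rintro ⟨v, hv0, hv⟩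
    refine ⟨v, ?_, hv0⟩
    rw [Module.End.mem_eigenspace_iff, Matrix.toLin'_apply]
    rw [Matrix.sub_mulVec, Matrix.smul_mulVec, Matrix.one_mulVec, sub_eq_zero] at hv
    exact hv.symm

lemma det_smul_one_sub_of_isHermitian {m : Type*} [Fintype m] [DecidableEq m]
    {A : Matrix m m ℝ} (hA : A.IsHermitian) (x : ℝ) :
    (x • (1 : Matrix m m ℝ) - A).det = ∏ i, (x - hA.eigenvalues i) := by
  have hU : (hA.eigenvectorUnitary : Matrix m m ℝ) * star (hA.eigenvectorUnitary : Matrix m m ℝ) = 1 :=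
    (Matrix.mem_unitaryGroup_iff).mp (hA.eigenvectorUnitary).2
  have hU' : star (hA.eigenvectorUnitary : Matrix m m ℝ) * (hA.eigenvectorUnitary : Matrix m m ℝ) = 1 :=
    (Matrix.mem_unitaryGroup_iff').mp (hA.eigenvectorUnitary).2
  have h1 : x • (1 : Matrix m m ℝ) =
      (hA.eigenvectorUnitary : Matrix m m ℝ) * (x • 1) *
        star (hA.eigenvectorUnitary : Matrix m m ℝ) := by
    rw [Matrix.mul_smul, Matrix.mul_one, Matrix.smul_mul, hU]
  have h2 : Matrix.diagonal (RCLike.ofReal ∘ hA.eigenvalues) =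
      Matrix.diagonal hA.eigenvalues := by
    congr 1
  conv_lhs => rw [hA.spectral_theorem, h1, h2, Unitary.conjStarAlgAut_apply]
  rw [← Matrix.sub_mul, ← Matrix.mul_sub, Matrix.det_mul, Matrix.det_mul, mul_comm,
    ← mul_assoc, ← Matrix.det_mul, hU', Matrix.det_one, one_mul]
  have h3 : x • (1 : Matrix m m ℝ) - Matrix.diagonal hA.eigenvalues
      = Matrix.diagonal (fun i => x - hA.eigenvalues i) := by
    ext i j
    by_cases h : i = j
    · subst h; simp [Matrix.diagonal_apply, Matrix.one_apply]
    · simp [Matrix.diagonal_apply, Matrix.one_apply, h]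
  rw [h3, Matrix.det_diagonal]

lemma det_smul_one_add_of_isHermitian {m : Type*} [Fintype m] [DecidableEq m]
    {A : Matrix m m ℝ} (hA : A.IsHermitian) (x : ℝ) :
    (x • (1 : Matrix m m ℝ) + A).det = ∏ i, (x + hA.eigenvalues i) := by
  have h1 : x • (1 : Matrix m m ℝ) + A = (-1 : ℝ) • ((-x) • (1 : Matrix m m ℝ) - A) := by
    rw [smul_sub, smul_smul]; norm_num
  rw [h1, Matrix.det_smul, det_smul_one_sub_of_isHermitian hA,
    ← Finset.card_univ, ← Finset.prod_const, ← Finset.prod_mul_distrib]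
  congr 1; funext i; ring

lemma charpoly_eq_prod_of_isHermitian {m : Type*} [Fintype m] [DecidableEq m]
    {A : Matrix m m ℝ} (hA : A.IsHermitian) :
    A.charpoly = ∏ i, (X - C (hA.eigenvalues i)) := by
  apply Polynomial.funext
  intro x
  rw [eval_charpoly', det_smul_one_sub_of_isHermitian hA, Polynomial.eval_prod]
  simp

lemma rpl_pos {γ τ c : ℝ} (hγ : 0 < γ) (hτ : 0 < τ) (hc : 0 < c) :
    0 < (-γ + Real.sqrt (γ ^ 2 + 4 * τ * c)) / (2 * τ) := by
  apply div_pos _ (by positivity)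
  have h : γ < Real.sqrt (γ ^ 2 + 4 * τ * c) := by
    have := Real.sqrt_lt_sqrt (sq_nonneg γ) (show γ ^ 2 < γ ^ 2 + 4 * τ * c by nlinarith)
    rwa [Real.sqrt_sq hγ.le] at this
  linarith

lemma rml_neg {γ τ c : ℝ} (hγ : 0 < γ) (hτ : 0 < τ) :
    (-γ - Real.sqrt (γ ^ 2 + 4 * τ * c)) / (2 * τ) < 0 := by
  apply div_neg_of_neg_of_pos _ (by positivity)
  have := Real.sqrt_nonneg (γ ^ 2 + 4 * τ * c)
  linarith

lemma quad_factor {γ τ c : ℝ} (hτ : 0 < τ) (hc : 0 ≤ c) (x : ℝ) :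
    (x - (-γ + Real.sqrt (γ ^ 2 + 4 * τ * c)) / (2 * τ)) *
      (x - (-γ - Real.sqrt (γ ^ 2 + 4 * τ * c)) / (2 * τ))
    = x ^ 2 + (γ / τ) * x - c / τ := by
  have hs : Real.sqrt (γ ^ 2 + 4 * τ * c) ^ 2 = γ ^ 2 + 4 * τ * c :=
    Real.sq_sqrt (by positivity)
  have hτ0 : (τ : ℝ) ≠ 0 := ne_of_gt hτ
  field_simp
  nlinarith [hs]

set_option linter.unnecessarySeqFocus false in
lemma charpolyJ_eq {N : ℕ} {B : Matrix (Fin N) (Fin N) ℝ} {γ τ : ℝ}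
    (hτ : 0 < τ) (hB : B.IsHermitian) (hd : ∀ i, hB.eigenvalues i < 0) :
    (Matrix.fromBlocks (0 : Matrix (Fin N) (Fin N) ℝ) 1 (-(1/τ) • B)
        (-(γ/τ) • (1 : Matrix (Fin N) (Fin N) ℝ))).charpoly
      = ∏ i, ((X - C ((-γ + Real.sqrt (γ^2 + 4*τ*(-(hB.eigenvalues i))))/(2*τ))) *
              (X - C ((-γ - Real.sqrt (γ^2 + 4*τ*(-(hB.eigenvalues i))))/(2*τ)))) := by
  apply Polynomial.eq_of_infinite_eval_eq
  apply Set.Infinite.mono _ ((Set.finite_singleton (0:ℝ)).infinite_compl)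
  intro x hx
  have hx0 : x ≠ 0 := by simpa using hx
  have hτ0 : τ ≠ 0 := ne_of_gt hτ
  simp only [Set.mem_setOf_eq]
  rw [eval_charpoly']
  have hJ : x • (1 : Matrix (Fin N ⊕ Fin N) (Fin N ⊕ Fin N) ℝ) -
      Matrix.fromBlocks 0 1 (-(1/τ) • B) (-(γ/τ) • 1)
      = Matrix.fromBlocks (x • 1) (-1) ((1/τ) • B) ((x + γ/τ) • 1) := by
    ext (i|i) (j|j) <;>
      simp [Matrix.fromBlocks, Matrix.one_apply, mul_ite, ite_mul, add_mul] <;>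
      split <;> simp
  haveI : Invertible (x • (1 : Matrix (Fin N) (Fin N) ℝ)) :=
    ⟨x⁻¹ • 1,
      by rw [Matrix.smul_mul, Matrix.one_mul, smul_smul, inv_mul_cancel₀ hx0, one_smul],
      by rw [Matrix.smul_mul, Matrix.one_mul, smul_smul, mul_inv_cancel₀ hx0, one_smul]⟩
  rw [hJ, Matrix.det_fromBlocks₁₁]
  have hinv : ⅟(x • (1 : Matrix (Fin N) (Fin N) ℝ)) = x⁻¹ • 1 :=
    invOf_eq_right_inv
      (by rw [Matrix.smul_mul, Matrix.one_mul, smul_smul, mul_inv_cancel₀ hx0, one_smul])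
  have hschur : ((x + γ/τ) • (1 : Matrix (Fin N) (Fin N) ℝ)) -
      ((1/τ) • B) * ⅟(x • (1 : Matrix (Fin N) (Fin N) ℝ)) * (-1)
      = x⁻¹ • ((x^2 + (γ/τ)*x) • (1 : Matrix (Fin N) (Fin N) ℝ) + (1/τ) • B) := by
    have e1 : x⁻¹ * (x^2 + (γ/τ)*x) = x + γ/τ := by field_simp
    rw [hinv]
    simp only [Matrix.mul_neg, Matrix.mul_smul, Matrix.mul_one, sub_neg_eq_add,
      smul_add, smul_smul, e1]
  rw [hschur, Matrix.det_smul, Matrix.det_smul, Matrix.det_one, mul_one]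
  have hfac : (x^2 + (γ/τ)*x) • (1 : Matrix (Fin N) (Fin N) ℝ) + (1/τ) • B
      = (1/τ) • ((τ*(x^2 + (γ/τ)*x)) • (1 : Matrix (Fin N) (Fin N) ℝ) + B) := by
    rw [smul_add, smul_smul]
    congr 2
    field_simp
  rw [hfac, Matrix.det_smul, det_smul_one_add_of_isHermitian hB]
  rw [Polynomial.eval_prod]
  simp only [Polynomial.eval_mul, Polynomial.eval_sub, Polynomial.eval_X, Polynomial.eval_C]
  have hq : ∀ i, (x - (-γ + Real.sqrt (γ^2 + 4*τ*(-(hB.eigenvalues i))))/(2*τ)) *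
      (x - (-γ - Real.sqrt (γ^2 + 4*τ*(-(hB.eigenvalues i))))/(2*τ))
      = x ^ 2 + (γ / τ) * x - (-(hB.eigenvalues i)) / τ := fun i =>
    quad_factor hτ (by linarith [hd i]) x
  calc x ^ Fintype.card (Fin N) *
        (x⁻¹ ^ Fintype.card (Fin N) *
          ((1/τ) ^ Fintype.card (Fin N) * ∏ i, (τ*(x^2 + (γ/τ)*x) + hB.eigenvalues i)))
      = (x * x⁻¹) ^ Fintype.card (Fin N) *
          ((1/τ) ^ Fintype.card (Fin N) * ∏ i, (τ*(x^2 + (γ/τ)*x) + hB.eigenvalues i)) := by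
        rw [mul_pow]; ring
    _ = (1/τ) ^ Fintype.card (Fin N) * ∏ i, (τ*(x^2 + (γ/τ)*x) + hB.eigenvalues i) := by
        rw [mul_inv_cancel₀ hx0, one_pow, one_mul]
    _ = ∏ i, ((1/τ) * (τ*(x^2 + (γ/τ)*x) + hB.eigenvalues i)) := by
        rw [Finset.prod_mul_distrib, Finset.prod_const, Finset.card_univ]
    _ = ∏ i, ((x - (-γ + Real.sqrt (γ^2 + 4*τ*(-(hB.eigenvalues i))))/(2*τ)) *
              (x - (-γ - Real.sqrt (γ^2 + 4*τ*(-(hB.eigenvalues i))))/(2*τ))) := by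
        refine Finset.prod_congr rfl fun i _ => ?_
        rw [hq i]
        field_simp
        ring

lemma roots_prod_X_sub_C' {N : ℕ} (f : Fin N → ℝ) :
    (∏ i, (X - C (f i))).roots = Finset.univ.val.map f := by
  have h : ∏ i, (X - C (f i)) = ((Finset.univ.val.map f).map (fun r => X - C r)).prod := by
    rw [Multiset.map_map, Finset.prod_eq_multiset_prod]
    rfl
  rw [h, Polynomial.roots_multiset_prod_X_sub_C]

end HypAux

open HypAux

theorem hyperbolicity_reduced_layer_dynamics
    (N : ℕ) (B : Matrix (Fin N) (Fin N) ℝ) (γ τ : ℝ)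
    (hγ : 0 < γ) (hτ : 0 < τ)
    (hsymm : B.IsSymm)
    (hneg : ∀ y : Fin N → ℝ, y ≠ 0 → y ⬝ᵥ B.mulVec y < 0) :
    (∀ z : ℂ,
      ((Matrix.fromBlocks (0 : Matrix (Fin N) (Fin N) ℝ)
          (1 : Matrix (Fin N) (Fin N) ℝ)
          (-(1 / τ) • B)
          (-(γ / τ) • (1 : Matrix (Fin N) (Fin N) ℝ))).charpoly.map
        (algebraMap ℝ ℂ)).IsRoot z → z.im = 0 ∧ z ≠ 0) ∧
    (∀ lam : ℝ,
      Module.End.HasEigenvalue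
        (Matrix.toLin' (Matrix.fromBlocks (0 : Matrix (Fin N) (Fin N) ℝ)
          (1 : Matrix (Fin N) (Fin N) ℝ)
          (-(1 / τ) • B)
          (-(γ / τ) • (1 : Matrix (Fin N) (Fin N) ℝ)))) lam ↔
      ∃ μ : ℝ, 0 < μ ∧
        Module.End.HasEigenvalue (Matrix.toLin' B) (-(μ ^ 2)) ∧
        (lam = (-γ + Real.sqrt (γ ^ 2 + 4 * τ * μ ^ 2)) / (2 * τ) ∨
         lam = (-γ - Real.sqrt (γ ^ 2 + 4 * τ * μ ^ 2)) / (2 * τ))) ∧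
    (∀ μ : ℝ, 0 < μ →
      0 < (-γ + Real.sqrt (γ ^ 2 + 4 * τ * μ ^ 2)) / (2 * τ) ∧
      (-γ - Real.sqrt (γ ^ 2 + 4 * τ * μ ^ 2)) / (2 * τ) < 0) ∧
    (((Matrix.fromBlocks (0 : Matrix (Fin N) (Fin N) ℝ)
        (1 : Matrix (Fin N) (Fin N) ℝ)
        (-(1 / τ) • B)
        (-(γ / τ) • (1 : Matrix (Fin N) (Fin N) ℝ))).charpoly.roots.filter
          (fun x => 0 < x)).card = N ∧
     ((Matrix.fromBlocks (0 : Matrix (Fin N) (Fin N) ℝ)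
        (1 : Matrix (Fin N) (Fin N) ℝ)
        (-(1 / τ) • B)
        (-(γ / τ) • (1 : Matrix (Fin N) (Fin N) ℝ))).charpoly.roots.filter
          (fun x => x < 0)).card = N) := by
  have hB : B.IsHermitian := by
    rw [Matrix.IsHermitian, Matrix.conjTranspose_eq_transpose_of_trivial]
    exact hsymm
  have hd : ∀ i, hB.eigenvalues i < 0 := by
    intro i
    have hv0 : (⇑(hB.eigenvectorBasis i) : Fin N → ℝ) ≠ 0 := by
      intro h
      exact hB.eigenvectorBasis.orthonormal.ne_zero i (by ext j; exact congrFun h j)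
    have h := hB.eigenvalues_eq i
    rw [h]
    simpa using hneg _ hv0
  have hcp := charpolyJ_eq (γ := γ) hτ hB hd
  have ha : ∀ i, 0 < (-γ + Real.sqrt (γ^2 + 4*τ*(-(hB.eigenvalues i))))/(2*τ) :=
    fun i => rpl_pos hγ hτ (by linarith [hd i])
  have hb : ∀ i, (-γ - Real.sqrt (γ^2 + 4*τ*(-(hB.eigenvalues i))))/(2*τ) < 0 :=
    fun i => rml_neg hγ hτ
  refine ⟨?_, ?_, ?_, ?_, ?_⟩
  · -- complex roots are real and nonzero
    intro z hz
    rw [hcp, Polynomial.map_prod, Polynomial.IsRoot.def, Polynomial.eval_prod,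
      Finset.prod_eq_zero_iff] at hz
    obtain ⟨i, -, hi⟩ := hz
    rw [Polynomial.map_mul, Polynomial.map_sub, Polynomial.map_sub, Polynomial.map_X,
      Polynomial.map_C, Polynomial.map_C, Polynomial.eval_mul, mul_eq_zero,
      Polynomial.eval_sub, Polynomial.eval_sub, Polynomial.eval_X, Polynomial.eval_C,
      Polynomial.eval_C, sub_eq_zero, sub_eq_zero] at hi
    simp only [Complex.coe_algebraMap] at hi
    rcases hi with hi | hi <;> subst hi
    · exact ⟨Complex.ofReal_im _, Complex.ofReal_ne_zero.mpr (ne_of_gt (ha i))⟩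
    · exact ⟨Complex.ofReal_im _, Complex.ofReal_ne_zero.mpr (ne_of_lt (hb i))⟩
  · -- eigenvalue characterization
    intro lam
    simp only [hasEigenvalue_iff_isRoot_charpoly]
    constructor
    · intro h
      rw [Polynomial.IsRoot.def, hcp, Polynomial.eval_prod, Finset.prod_eq_zero_iff] at h
      obtain ⟨i, -, hi⟩ := h
      simp only [Polynomial.eval_mul, Polynomial.eval_sub, Polynomial.eval_X,
        Polynomial.eval_C, mul_eq_zero, sub_eq_zero] at hi
      have hdi : (0:ℝ) < -(hB.eigenvalues i) := by linarith [hd i]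
      refine ⟨Real.sqrt (-(hB.eigenvalues i)), Real.sqrt_pos.mpr hdi, ?_, ?_⟩
      · have hsq : -(Real.sqrt (-(hB.eigenvalues i)) ^ 2) = hB.eigenvalues i := by
          rw [Real.sq_sqrt hdi.le]; ring
        rw [hsq, Polynomial.IsRoot.def, charpoly_eq_prod_of_isHermitian hB,
          Polynomial.eval_prod]
        apply Finset.prod_eq_zero (Finset.mem_univ i)
        simp
      · have hsq : Real.sqrt (-(hB.eigenvalues i)) ^ 2 = -(hB.eigenvalues i) :=
          Real.sq_sqrt hdi.le
        rw [hsq]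
        exact hi
    · rintro ⟨μ, hμ, hroot, hlam⟩
      rw [Polynomial.IsRoot.def, charpoly_eq_prod_of_isHermitian hB,
        Polynomial.eval_prod, Finset.prod_eq_zero_iff] at hroot
      obtain ⟨j, -, hj⟩ := hroot
      simp only [Polynomial.eval_sub, Polynomial.eval_X, Polynomial.eval_C,
        sub_eq_zero] at hj
      have hsq : μ ^ 2 = -(hB.eigenvalues j) := by rw [← hj]; ring
      rw [Polynomial.IsRoot.def, hcp, Polynomial.eval_prod]
      apply Finset.prod_eq_zero (Finset.mem_univ j)
      simp only [Polynomial.eval_mul, Polynomial.eval_sub, Polynomial.eval_X,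
        Polynomial.eval_C]
      rw [← hsq]
      rcases hlam with h | h <;> rw [h] <;> ring
  · -- sign of the two roots
    intro μ hμ
    exact ⟨rpl_pos hγ hτ (by positivity), rml_neg hγ hτ⟩
  · -- N positive roots
    rw [hcp, Finset.prod_mul_distrib, Polynomial.roots_mul
        (mul_ne_zero
          ((Polynomial.monic_prod_of_monic _ _ fun i _ => Polynomial.monic_X_sub_C _).ne_zero)
          ((Polynomial.monic_prod_of_monic _ _ fun i _ => Polynomial.monic_X_sub_C _).ne_zero)),
      roots_prod_X_sub_C', roots_prod_X_sub_C', Multiset.filter_add]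
    rw [Multiset.filter_eq_self.mpr, Multiset.filter_eq_nil.mpr]
    · simp
    · intro x hx
      obtain ⟨i, -, rfl⟩ := Multiset.mem_map.mp hx
      exact not_lt.mpr (hb i).le
    · intro x hx
      obtain ⟨i, -, rfl⟩ := Multiset.mem_map.mp hx
      exact ha i
  · -- N negative roots
    rw [hcp, Finset.prod_mul_distrib, Polynomial.roots_mul
        (mul_ne_zero
          ((Polynomial.monic_prod_of_monic _ _ fun i _ => Polynomial.monic_X_sub_C _).ne_zero)
          ((Polynomial.monic_prod_of_monic _ _ fun i _ => Polynomial.monic_X_sub_C _).ne_zero)),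
      roots_prod_X_sub_C', roots_prod_X_sub_C', Multiset.filter_add]
    rw [Multiset.filter_eq_nil.mpr, Multiset.filter_eq_self.mpr]
    · simp
    · intro x hx
      obtain ⟨i, -, rfl⟩ := Multiset.mem_map.mp hx
      exact hb i
    · intro x hx
      obtain ⟨i, -, rfl⟩ := Multiset.mem_map.mp hx
      exact not_lt.mpr (ha i).le
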